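/- arXiv:1801.02071 — 5 statements merged into one kernel-verified Lean document; each statement's English description precedes it below -/
import Mathlib

section
/- With the notation of the quasi-multiplicative basis setting: for i ∈ I, j̄ ∈ Ī (the barred copy of I), and a₁,…,a_{n-1} elements of 𝔉 = I ∪ {v}, it holds that i ∈ μ(j̄, a₁,…,a_{n-1}) if and only if j ∈ μ(ī, a₁,…,a_{n-1}). -/
set_option maxHeartbeats 1000000

/-- For `i ∈ I`, `j̄ ∈ Ī` and `a₁, …, a_{n-1} ∈ 𝔉`:
`i ∈ μ(j̄, a₁, …, a_{n-1})` iff `j ∈ μ(ī, a₁, …, a_{n-1})`, where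
`μ(j̄, c) = ⋃_{k, σ} b_σ(c k, j̄, c̄ with the k-th entry removed)`.  The hypotheses are the
`a`/`b` compatibilities of a quasi-multiplicative basis and the invariance of `a` under
simultaneous permutation of its arguments. -/
theorem stmt1 {I : Type} {n : ℕ}
    (a : Equiv.Perm (Fin (n + 2)) → (Fin (n + 2) → Option I) → Set (Option I))
    (b : Equiv.Perm (Fin (n + 2)) → Option I → (Fin (n + 1) → Option I) → Set (Option I))
    (hsub : ∀ σ c, (a σ c).Subsingleton)
    (H1 : ∀ (σ : Equiv.Perm (Fin (n + 2))) (i j : Option I) (c : Fin (n + 1) → Option I),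
      a σ (Fin.cons j c) = {i} → j ∈ b σ i c)
    (H2 : ∀ (σ : Equiv.Perm (Fin (n + 2))) (i j : Option I) (c : Fin (n + 1) → Option I),
      i ∈ b σ j c → a σ (Fin.cons i c) = {j})
    (Hperm : ∀ (σ ν : Equiv.Perm (Fin (n + 2))) (c c' : Fin (n + 2) → Option I),
      (∀ t, c (σ t) = c' (ν t)) → a σ c = a ν c')
    (i j : I) (c : Fin (n + 1) → Option I) :
    (some i ∈ ⋃ (k : Fin (n + 1)) (σ : Equiv.Perm (Fin (n + 2))),
        b σ (c k) (Fin.cons (some j) fun t => c (k.succAbove t))) ↔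
    (some j ∈ ⋃ (k : Fin (n + 1)) (σ : Equiv.Perm (Fin (n + 2))),
        b σ (c k) (Fin.cons (some i) fun t => c (k.succAbove t))) := by
  have key : ∀ (x y : I),
      (some x ∈ ⋃ (k : Fin (n + 1)) (σ : Equiv.Perm (Fin (n + 2))),
        b σ (c k) (Fin.cons (some y) fun t => c (k.succAbove t))) →
      (some y ∈ ⋃ (k : Fin (n + 1)) (σ : Equiv.Perm (Fin (n + 2))),
        b σ (c k) (Fin.cons (some x) fun t => c (k.succAbove t))) := by
    intro x y h
    simp only [Set.mem_iUnion] at h ⊢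
    obtain ⟨k, σ, hb⟩ := h
    have ha := H2 σ _ _ _ hb
    refine ⟨k, Equiv.swap 0 1 * σ, H1 _ _ _ _ ?_⟩
    rw [← ha]
    refine (Hperm σ (Equiv.swap 0 1 * σ) _ _ ?_).symm
    intro t
    have hgen : ∀ s : Fin (n + 2),
        (Fin.cons (some x) (Fin.cons (some y) fun t => c (k.succAbove t)) : Fin (n+2) → Option I) s
        = (Fin.cons (some y) (Fin.cons (some x) fun t => c (k.succAbove t)) : Fin (n+2) → Option I)
          (Equiv.swap 0 1 s) := by
      intro s
      refine Fin.cases ?_ (fun u => ?_) s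
      · simp [Equiv.swap_apply_left]
      · refine Fin.cases ?_ (fun w => ?_) u
        · have : ((0 : Fin (n + 1)).succ : Fin (n + 2)) = 1 := rfl
          simp [this, Equiv.swap_apply_right]
        · have h0 : (w.succ.succ : Fin (n + 2)) ≠ 0 := Fin.succ_ne_zero _
          have h1 : (w.succ.succ : Fin (n + 2)) ≠ 1 := by
            have : (1 : Fin (n + 2)) = (0 : Fin (n + 1)).succ := rfl
            rw [this]
            exact fun h => Fin.succ_ne_zero _ (Fin.succ_injective _ h)
          rw [Equiv.swap_apply_of_ne_of_ne h0 h1]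
          simp
    simpa using hgen (σ t)
  exact ⟨key i j, key j i⟩
end

section
/- Let J ∈ P(I ∪ Ī) with J = J̄ (bar-invariant), let a₂,…,aₙ ∈ 𝔉 ∪ 𝔉̄ form an admissible tuple, and let i ∈ I. Then the following are equivalent: (1) i ∈ φ(J, a₂,…,aₙ); (2) either φ({i}, ā₂,…,āₙ) ∩ J ∩ I ≠ ∅ or φ({ī}, a₂,…,aₙ) ∩ J ∩ I ≠ ∅. -/
set_option maxHeartbeats 1000000

/-- The map `φ(J, X) = K ∪ K̄` with `K = (⋃_{j ∈ J} μ(j, X)) \ {v}`, where `I ∪ Ī` is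
encoded as `I ⊕ I` (left = unbarred), `𝔉 = I ∪ {v}` as `Option I` (`none` = `v`),
`𝔉 ∪ 𝔉̄` as `Option I ⊕ Option I`, and an admissible tuple as a `Bool` (barred?) together
with an `(n+1)`-tuple over `𝔉`. -/
def phiAbs {I : Type} {n : ℕ}
    (mu : Option I ⊕ Option I → Bool × (Fin (n + 1) → Option I) → Set (Option I))
    (J : Set (I ⊕ I)) (X : Bool × (Fin (n + 1) → Option I)) : Set (I ⊕ I) :=
  {p | ∃ i : I, (p = Sum.inl i ∨ p = Sum.inr i) ∧
    ∃ j ∈ J, some i ∈ mu (Sum.map some some j) X}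

/-- For a bar-invariant `J ⊆ I ∪ Ī`, an admissible tuple `X` and `i ∈ I`:
`i ∈ φ(J, X)` iff `φ({i}, X̄) ∩ J ∩ I ≠ ∅` or `φ({ī}, X) ∩ J ∩ I ≠ ∅`.  The hypotheses are
the two symmetry properties of `μ` (`X̄ = (!X.1, X.2)` is the barred tuple). -/
theorem stmt3 {I : Type} {n : ℕ}
    (mu : Option I ⊕ Option I → Bool × (Fin (n + 1) → Option I) → Set (Option I))
    (hsym1 : ∀ (i j : I) (X : Bool × (Fin (n + 1) → Option I)),
      some i ∈ mu (Sum.inl (some j)) X ↔ some j ∈ mu (Sum.inl (some i)) (!X.1, X.2))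
    (hsym2 : ∀ (i j : I) (X : Bool × (Fin (n + 1) → Option I)),
      some i ∈ mu (Sum.inr (some j)) X ↔ some j ∈ mu (Sum.inr (some i)) X)
    (J : Set (I ⊕ I)) (hJ : Sum.swap '' J = J)
    (X : Bool × (Fin (n + 1) → Option I)) (i : I) :
    Sum.inl i ∈ phiAbs mu J X ↔
      (phiAbs mu {Sum.inl i} (!X.1, X.2) ∩ J ∩ Set.range Sum.inl).Nonempty ∨
      (phiAbs mu {Sum.inr i} X ∩ J ∩ Set.range Sum.inl).Nonempty := by
  have hswap : ∀ p : I ⊕ I, p ∈ J ↔ Sum.swap p ∈ J := by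
    intro p
    constructor
    · intro hp; rw [← hJ]; exact ⟨p, hp, rfl⟩
    · intro hp
      have : Sum.swap (Sum.swap p) ∈ Sum.swap '' J := ⟨Sum.swap p, hp, rfl⟩
      simpa [hJ] using this
  constructor
  · rintro ⟨i', hi', j, hjJ, hmu⟩
    obtain rfl : i = i' := by
      rcases hi' with h | h
      · exact Sum.inl.inj h
      · exact absurd h (by simp)
    rcases j with k | k
    · exact Or.inl ⟨Sum.inl k, ⟨⟨k, Or.inl rfl, Sum.inl i, rfl,
        (hsym1 i k X).mp hmu⟩, hjJ⟩, k, rfl⟩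
    · exact Or.inr ⟨Sum.inl k, ⟨⟨k, Or.inl rfl, Sum.inr i, rfl,
        (hsym2 i k X).mp hmu⟩, (hswap (Sum.inr k)).mp hjJ⟩, k, rfl⟩
  · rintro (⟨_, ⟨⟨k, hk, j, hj, hmu⟩, hpJ⟩, m, rfl⟩ | ⟨_, ⟨⟨k, hk, j, hj, hmu⟩, hpJ⟩, m, rfl⟩) <;>
      simp only [Set.mem_singleton_iff] at hj <;> subst hj
    · obtain rfl : m = k := by
        rcases hk with h | h
        · exact Sum.inl.inj h
        · exact absurd h (by simp)
      exact ⟨i, Or.inl rfl, Sum.inl m, hpJ, (hsym1 i m X).mpr hmu⟩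
    · obtain rfl : m = k := by
        rcases hk with h | h
        · exact Sum.inl.inj h
        · exact absurd h (by simp)
      exact ⟨i, Or.inl rfl, Sum.inr m, (hswap (Sum.inl m)).mp hpJ, (hsym2 i m X).mpr hmu⟩
end

section
/- Define a relation ∼ on I by: i ∼ j iff i = j or there exist t ≥ 1 and tuples X₁,…,X_t (each an admissible (n−1)-tuple over 𝔉 ∪ 𝔉̄) and ĩ ∈ {i, ī} such that the sets φ({ĩ}, X₁), φ(φ({ĩ}, X₁), X₂), …, φ(φ(⋯φ({ĩ}, X₁)⋯), X_{t-1}) are all nonempty and j ∈ φ(φ(⋯φ({ĩ}, X₁)⋯), X_t). Then ∼ is an equivalence relation on I. -/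
set_option maxHeartbeats 1000000

/-- Iterated application of `φ` along a list of admissible tuples. -/
def chainAbs {I : Type} {n : ℕ}
    (mu : Option I ⊕ Option I → Bool × (Fin (n + 1) → Option I) → Set (Option I)) :
    Set (I ⊕ I) → List (Bool × (Fin (n + 1) → Option I)) → Set (I ⊕ I)
  | s, [] => s
  | s, X :: r => chainAbs mu (phiAbs mu s X) r

/-- The connection relation determined by `μ`. -/
def ConnectedAbs {I : Type} {n : ℕ}
    (mu : Option I ⊕ Option I → Bool × (Fin (n + 1) → Option I) → Set (Option I))
    (i j : I) : Prop :=
  i = j ∨ ∃ (Xs : List (Bool × (Fin (n + 1) → Option I))) (st : I ⊕ I),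
    Xs ≠ [] ∧ (st = Sum.inl i ∨ st = Sum.inr i) ∧
    (∀ m, m < Xs.length → (chainAbs mu {st} (List.take m Xs)).Nonempty) ∧
    Sum.inl j ∈ chainAbs mu {st} Xs

section
variable {I : Type} {n : ℕ}
  (mu : Option I ⊕ Option I → Bool × (Fin (n + 1) → Option I) → Set (Option I))

lemma phi_mono {J J' : Set (I ⊕ I)} (h : J ⊆ J') (X : Bool × (Fin (n + 1) → Option I)) :
    phiAbs mu J X ⊆ phiAbs mu J' X := by
  rintro p ⟨i, hp, j, hj, hmu⟩
  exact ⟨i, hp, j, h hj, hmu⟩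

lemma chain_mono : ∀ (Xs : List (Bool × (Fin (n + 1) → Option I))) {J J' : Set (I ⊕ I)},
    J ⊆ J' → chainAbs mu J Xs ⊆ chainAbs mu J' Xs
  | [], _, _, h => h
  | X :: r, J, J', h => chain_mono r (phi_mono mu h X)

lemma chain_append : ∀ (Xs Ys : List (Bool × (Fin (n + 1) → Option I))) (s : Set (I ⊕ I)),
    chainAbs mu s (Xs ++ Ys) = chainAbs mu (chainAbs mu s Xs) Ys
  | [], Ys, s => rfl
  | X :: r, Ys, s => chain_append r Ys (phiAbs mu s X)

lemma phi_bar {J : Set (I ⊕ I)} {X : Bool × (Fin (n + 1) → Option I)} {x : I} :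
    Sum.inl x ∈ phiAbs mu J X ↔ Sum.inr x ∈ phiAbs mu J X := by
  constructor
  · rintro ⟨i, hp, j, hj, hmu⟩
    rcases hp with hp | hp <;> cases hp
    exact ⟨x, Or.inr rfl, j, hj, hmu⟩
  · rintro ⟨i, hp, j, hj, hmu⟩
    rcases hp with hp | hp <;> cases hp
    exact ⟨x, Or.inl rfl, j, hj, hmu⟩

lemma chain_bar {Xs : List (Bool × (Fin (n + 1) → Option I))} (hne : Xs ≠ [])
    {s : Set (I ⊕ I)} {x : I} :
    Sum.inl x ∈ chainAbs mu s Xs ↔ Sum.inr x ∈ chainAbs mu s Xs := by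
  rcases List.eq_nil_or_concat Xs with h | ⟨Ys, Y, rfl⟩
  · exact absurd h hne
  · rw [List.concat_eq_append, chain_append]
    exact phi_bar mu

end

section
variable {I : Type} {n : ℕ}
  {mu : Option I ⊕ Option I → Bool × (Fin (n + 1) → Option I) → Set (Option I)}

/-- One-step connection from a single starting point. -/
lemma one_step {i j : I} {st : I ⊕ I} (hst : st = Sum.inl i ∨ st = Sum.inr i)
    {X : Bool × (Fin (n + 1) → Option I)}
    (h : Sum.inl j ∈ phiAbs mu {st} X) : ConnectedAbs mu i j := by
  refine Or.inr ⟨[X], st, by simp, hst, ?_, h⟩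
  intro m hm
  have hm0 : m = 0 := by simpa using hm
  subst hm0
  exact ⟨st, rfl⟩

/-- The key lemma: pulling a membership in `φ(J, X)` back to `J`. -/
lemma key (hsym1 : ∀ (i j : I) (X : Bool × (Fin (n + 1) → Option I)),
      some i ∈ mu (Sum.inl (some j)) X ↔ some j ∈ mu (Sum.inl (some i)) (!X.1, X.2))
    (hsym2 : ∀ (i j : I) (X : Bool × (Fin (n + 1) → Option I)),
      some i ∈ mu (Sum.inr (some j)) X ↔ some j ∈ mu (Sum.inr (some i)) X)
    {J : Set (I ⊕ I)} (hbar : ∀ x : I, Sum.inr x ∈ J → Sum.inl x ∈ J)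
    {j : I} {X : Bool × (Fin (n + 1) → Option I)}
    (h : Sum.inl j ∈ phiAbs mu J X) :
    ∃ j' : I, Sum.inl j' ∈ J ∧
      (Sum.inl j' ∈ phiAbs mu {Sum.inl j} (!X.1, X.2) ∨
        Sum.inl j' ∈ phiAbs mu {Sum.inr j} X) := by
  obtain ⟨i0, hp, q, hq, hmu⟩ := h
  rcases hp with hp | hp <;> cases hp
  cases q with
  | inl j' =>
    refine ⟨j', hq, Or.inl ⟨j', Or.inl rfl, Sum.inl j, rfl, ?_⟩⟩
    exact (hsym1 j j' X).mp hmu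
  | inr j' =>
    refine ⟨j', hbar j' hq, Or.inr ⟨j', Or.inl rfl, Sum.inr j, rfl, ?_⟩⟩
    exact (hsym2 j j' X).mp hmu

lemma conn_trans {i j k : I} (hij : ConnectedAbs mu i j) (hjk : ConnectedAbs mu j k) :
    ConnectedAbs mu i k := by
  rcases hij with rfl | ⟨Xs, sti, hXne, hsti, hXpre, hXj⟩
  · exact hjk
  rcases hjk with rfl | ⟨Ys, stj, hYne, hstj, hYpre, hYk⟩
  · exact Or.inr ⟨Xs, sti, hXne, hsti, hXpre, hXj⟩
  have hsub : {stj} ⊆ chainAbs mu {sti} Xs := by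
    intro p hp
    cases hp
    rcases hstj with rfl | rfl
    · exact hXj
    · exact (chain_bar mu hXne).mp hXj
  refine Or.inr ⟨Xs ++ Ys, sti, by simp [hXne], hsti, ?_, ?_⟩
  · intro m hm
    rw [List.length_append] at hm
    rcases le_or_gt m Xs.length with hle | hgt
    · rw [List.take_append_of_le_length hle]
      rcases lt_or_eq_of_le hle with h | rfl
      · exact hXpre m h
      · rw [List.take_length]
        exact ⟨Sum.inl j, hXj⟩
    · have : (Xs ++ Ys).take m = Xs ++ Ys.take (m - Xs.length) := by
        rw [List.take_append, List.take_of_length_le (le_of_lt hgt)]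
      rw [this, chain_append]
      have hpre := hYpre (m - Xs.length) (by omega)
      obtain ⟨p, hp⟩ := hpre
      exact ⟨p, chain_mono mu _ hsub hp⟩
  · rw [chain_append]
    exact chain_mono mu Ys hsub hYk

end

section
variable {I : Type} {n : ℕ}
  {mu : Option I ⊕ Option I → Bool × (Fin (n + 1) → Option I) → Set (Option I)}

lemma symm_aux (hsym1 : ∀ (i j : I) (X : Bool × (Fin (n + 1) → Option I)),
      some i ∈ mu (Sum.inl (some j)) X ↔ some j ∈ mu (Sum.inl (some i)) (!X.1, X.2))
    (hsym2 : ∀ (i j : I) (X : Bool × (Fin (n + 1) → Option I)),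
      some i ∈ mu (Sum.inr (some j)) X ↔ some j ∈ mu (Sum.inr (some i)) X)
    (Xs : List (Bool × (Fin (n + 1) → Option I))) :
    ∀ (st : I ⊕ I) (i j : I), Xs ≠ [] → (st = Sum.inl i ∨ st = Sum.inr i) →
      (∀ m, m < Xs.length → (chainAbs mu {st} (List.take m Xs)).Nonempty) →
      Sum.inl j ∈ chainAbs mu {st} Xs → ConnectedAbs mu j i := by
  induction Xs using List.reverseRecOn with
  | nil => intro _ _ _ h; exact absurd rfl h
  | append_singleton Ys Y ih =>
    intro st i j _ hst hpre hj
    rw [chain_append] at hj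
    rcases eq_or_ne Ys [] with rfl | hYne
    · -- base case: single step
      simp only [chainAbs] at hj
      obtain ⟨i0, hp, q, hq, hmu⟩ := hj
      rcases hp with hp | hp <;> cases hp
      cases hq
      rcases hst with rfl | rfl
      · -- st = inl i : use hsym1
        have : some i ∈ mu (Sum.inl (some j)) (!Y.1, Y.2) := (hsym1 j i Y).mp hmu
        exact one_step (Or.inl rfl) ⟨i, Or.inl rfl, Sum.inl j, rfl, this⟩
      · -- st = inr i : use hsym2
        have : some i ∈ mu (Sum.inr (some j)) Y := (hsym2 j i Y).mp hmu
        exact one_step (Or.inr rfl) ⟨i, Or.inl rfl, Sum.inr j, rfl, this⟩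
    · -- inductive step
      have hbar : ∀ x : I, Sum.inr x ∈ chainAbs mu {st} Ys → Sum.inl x ∈ chainAbs mu {st} Ys :=
        fun x hx => (chain_bar mu hYne).mpr hx
      obtain ⟨j', hj'J, hstep⟩ := key hsym1 hsym2 hbar hj
      have h1 : ConnectedAbs mu j j' := by
        rcases hstep with h | h
        · exact one_step (Or.inl rfl) h
        · exact one_step (Or.inr rfl) h
      have h2 : ConnectedAbs mu j' i := by
        refine ih st i j' hYne hst ?_ hj'J
        intro m hm
        have := hpre m (by rw [List.length_append]; omega)
        rwa [List.take_append_of_le_length (le_of_lt hm)] at this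
      exact conn_trans h1 h2

end


/-- The connection relation `∼` on `I` (defined via iterated application of `φ`, with
reflexivity by convention) is an equivalence relation, provided `μ` satisfies the two
symmetry properties. -/
theorem stmt4 {I : Type} {n : ℕ}
    (mu : Option I ⊕ Option I → Bool × (Fin (n + 1) → Option I) → Set (Option I))
    (hsym1 : ∀ (i j : I) (X : Bool × (Fin (n + 1) → Option I)),
      some i ∈ mu (Sum.inl (some j)) X ↔ some j ∈ mu (Sum.inl (some i)) (!X.1, X.2))
    (hsym2 : ∀ (i j : I) (X : Bool × (Fin (n + 1) → Option I)),
      some i ∈ mu (Sum.inr (some j)) X ↔ some j ∈ mu (Sum.inr (some i)) X) :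
    Equivalence (ConnectedAbs mu) := by
  refine ⟨fun i => Or.inl rfl, ?_, conn_trans⟩
  intro i j hij
  rcases hij with rfl | ⟨Xs, st, hne, hst, hpre, hj⟩
  · exact Or.inl rfl
  · exact symm_aux hsym1 hsym2 Xs st i j hne hst hpre hj
end

section
/- Let L = V ⊕ W be a generalized Lie-type color algebra admitting a quasi-multiplicative basis {e_i}_{i∈I} of W ≠ 0, and let ∼ be the connection equivalence relation on I. For i ∈ I set W_{[i]} = ⊕_{j∈[i]} 𝔽e_j, V_{[i]} = (Σ_{i₁,…,iₙ∈[i]} 𝔽⟨e_{i₁},…,e_{iₙ}⟩) ∩ V, and 𝔍_{[i]} = V_{[i]} ⊕ W_{[i]}. Then 𝔍_{[i]} is a color gLt-ideal of L, i.e. ⟨𝔍_{[i]}, L, …, L⟩_σ ⊆ 𝔍_{[i]} for every σ ∈ Sₙ, and 𝔍_{[i]} admits a quasi-multiplicative basis inherited from that of L. -/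
set_option maxHeartbeats 1000000

/-- A (color) generalized Lie-type algebra: an `(n+2)`-ary `G`-graded algebra with
bicharacter `epsilon` satisfying the (colored) generalized Lie-type identities with
structure constants `alpha` (allowed to depend on the degrees of the arguments). -/
structure ColorGLT (F : Type) [Field F] (G : Type) [AddCommGroup G] [DecidableEq G]
    (L : Type) [AddCommGroup L] [Module F L] (n : ℕ) where
  bracket : MultilinearMap F (fun _ : Fin (n + 2) => L) L
  grading : G → Submodule F L
  isInternal : DirectSum.IsInternal grading
  bracket_graded : ∀ (g : Fin (n + 2) → G) (x : Fin (n + 2) → L),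
    (∀ t, x t ∈ grading (g t)) → bracket x ∈ grading (∑ t, g t)
  epsilon : G → G → F
  epsilon_ne_zero : ∀ g h, epsilon g h ≠ 0
  epsilon_add_left : ∀ g h k, epsilon (g + h) k = epsilon g k * epsilon h k
  epsilon_add_right : ∀ g h k, epsilon k (g + h) = epsilon k g * epsilon k h
  epsilon_skew : ∀ g h, epsilon g h * epsilon h g = 1
  alpha : Fin (n + 2) → Fin (n + 2) → Fin (n + 2) → Equiv.Perm (Fin (n + 2)) →
      Equiv.Perm (Fin (n + 1)) → (Fin (n + 2) → G) → (Fin (n + 1) → G) → F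
  glt : ∀ (k : Fin (n + 2)) (gx : Fin (n + 2) → G) (gy : Fin (n + 1) → G)
      (x : Fin (n + 2) → L) (y : Fin (n + 1) → L),
      (∀ t, x t ∈ grading (gx t)) → (∀ t, y t ∈ grading (gy t)) →
      bracket (Fin.insertNth k (bracket x) y) =
        ∑ i : Fin (n + 2), ∑ j : Fin (n + 2), ∑ σ₁ : Equiv.Perm (Fin (n + 2)),
          ∑ σ₂ : Equiv.Perm (Fin (n + 1)),
            alpha i j k σ₁ σ₂ gx gy •
              bracket (Function.update (fun t => x (σ₁ t)) i
                (bracket (Fin.insertNth j (x (σ₁ i)) (fun t => y (σ₂ t)))))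

namespace ColorGLT

variable {F : Type} [Field F] {G : Type} [AddCommGroup G] [DecidableEq G]
    {L : Type} [AddCommGroup L] [Module F L] {n : ℕ}

/-- A color gLt-ideal: a graded subspace `S` with `⟨S, L, …, L⟩_σ ⊆ S` for all `σ ∈ Sₙ`. -/
def IsIdeal (A : ColorGLT F G L n) (S : Submodule F L) : Prop :=
  (S = ⨆ g : G, S ⊓ A.grading g) ∧
  ∀ (σ : Equiv.Perm (Fin (n + 2))) (x : Fin (n + 2) → L),
    x 0 ∈ S → A.bracket (fun t => x (σ t)) ∈ S

/-- `L` is centerless: `Z(L) = {x : ⟨x, L, …, L⟩_σ = 0 ∀ σ} = 0`. -/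
def Centerless (A : ColorGLT F G L n) : Prop :=
  ∀ x : L, (∀ (σ : Equiv.Perm (Fin (n + 2))) (y : Fin (n + 2) → L),
    y 0 = x → A.bracket (fun t => y (σ t)) = 0) → x = 0

end ColorGLT

/-- A quasi-multiplicative basis of a color gLt-algebra: `L = V ⊕ W`, with a homogeneous
basis `{e i}` of `W ≠ 0` satisfying the three quasi-multiplicativity conditions. -/
structure QMBasis {F : Type} [Field F] {G : Type} [AddCommGroup G] [DecidableEq G]
    {L : Type} [AddCommGroup L] [Module F L] {n : ℕ}
    (A : ColorGLT F G L n) (I : Type) where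
  V : Submodule F L
  W : Submodule F L
  compl : IsCompl V W
  W_ne_bot : W ≠ ⊥
  V_graded : V = ⨆ g : G, V ⊓ A.grading g
  W_graded : W = ⨆ g : G, W ⊓ A.grading g
  e : I → L
  deg : I → G
  e_homog : ∀ i, e i ∈ A.grading (deg i)
  e_indep : LinearIndependent F e
  e_span : Submodule.span F (Set.range e) = W
  qm1 : ∀ c : Fin (n + 2) → I,
    (∃ j, A.bracket (fun t => e (c t)) ∈ Submodule.span F {e j}) ∨
      A.bracket (fun t => e (c t)) ∈ V
  qm2 : ∀ (σ : Equiv.Perm (Fin (n + 2))) (S : Finset (Fin (n + 2))),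
    S.Nonempty → S ≠ Finset.univ → ∀ ind : Fin (n + 2) → I, ∃ j : I,
      ∀ x : Fin (n + 2) → L, (∀ t, t ∈ S → x t = e (ind t)) →
        (∀ t, t ∉ S → x t ∈ V) →
        A.bracket (fun t => x (σ t)) ∈ Submodule.span F {e j}
  qm3 : (∃ j, ∀ x : Fin (n + 2) → L, (∀ t, x t ∈ V) →
          A.bracket x ∈ Submodule.span F {e j}) ∨
        (∀ x : Fin (n + 2) → L, (∀ t, x t ∈ V) → A.bracket x ∈ V)

namespace QMBasis

variable {F : Type} [Field F] {G : Type} [AddCommGroup G] [DecidableEq G]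
    {L : Type} [AddCommGroup L] [Module F L] {n : ℕ} {I : Type}
    {A : ColorGLT F G L n}

/-- The set of elements represented by an index of `𝔉 = I ∪ {v}`: `e i` for `some i`,
the subspace `V` for `none` (= `v`). -/
def elemSet (B : QMBasis A I) : Option I → Set L
  | none => (B.V : Set L)
  | some i => {B.e i}

/-- The target set of an index of `𝔉`: the line `𝔽 e j` for `some j`, `V` for `v`. -/
def targetSet (B : QMBasis A I) : Option I → Set L
  | none => (B.V : Set L)
  | some j => (Submodule.span F {B.e j} : Set L)

/-- `x ∈ a_σ(c)`: the `σ`-permuted product of the elements represented by `c` is nonzero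
and lands in the target represented by `x`; the value `v` is only allowed for all-basis
or all-`V` tuples. -/
def aMem (B : QMBasis A I) (σ : Equiv.Perm (Fin (n + 2)))
    (c : Fin (n + 2) → Option I) (x : Option I) : Prop :=
  (∃ z : Fin (n + 2) → L, (∀ t, z t ∈ B.elemSet (c (σ t))) ∧ A.bracket z ≠ 0) ∧
  (∀ z : Fin (n + 2) → L, (∀ t, z t ∈ B.elemSet (c (σ t))) → A.bracket z ∈ B.targetSet x) ∧
  (x = none → ((∀ t, (c t).isSome = true) ∨ (∀ t, c t = none)))

/-- An admissible `(n+1)`-tuple over `𝔉 ∪ 𝔉̄`: all entries barred (`true`) or all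
unbarred (`false`). -/
abbrev Tup (I : Type) (n : ℕ) := Bool × (Fin (n + 1) → Option I)

/-- `x ∈ μ(j, X)` where `j ∈ 𝔉 ∪ 𝔉̄` (left = unbarred, right = barred) and `X` is an
admissible tuple; defined via `a_σ` and `b_σ` as in the paper. -/
def muMem (B : QMBasis A I) :
    Option I ⊕ Option I → Tup I n → Option I → Prop
  | Sum.inl j, (false, c), x => ∃ σ : Equiv.Perm (Fin (n + 2)), B.aMem σ (Fin.cons j c) x
  | Sum.inl j, (true, c), x => ∃ σ : Equiv.Perm (Fin (n + 2)), B.aMem σ (Fin.cons x c) j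
  | Sum.inr j, (false, c), x =>
      ∃ (k : Fin (n + 1)) (σ : Equiv.Perm (Fin (n + 2))),
        B.aMem σ (Fin.cons x (Fin.cons j (fun t => c (k.succAbove t)))) (c k)
  | Sum.inr _, (true, _), _ => False

/-- The map `φ : P(I ∪ Ī) × T → P(I ∪ Ī)`, `φ(J, X) = K ∪ K̄` with
`K = (⋃_{j ∈ J} μ(j, X)) \ {v}` (left = `I`, right = `Ī`). -/
def phi (B : QMBasis A I) (J : Set (I ⊕ I)) (X : Tup I n) : Set (I ⊕ I) :=
  {p | ∃ i : I, (p = Sum.inl i ∨ p = Sum.inr i) ∧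
    ∃ j ∈ J, B.muMem (Sum.map some some j) X (some i)}

/-- Iterated application of `φ` along a list of tuples. -/
def chain (B : QMBasis A I) : Set (I ⊕ I) → List (Tup I n) → Set (I ⊕ I)
  | s, [] => s
  | s, X :: r => chain B (B.phi s X) r

/-- The connection relation: `i` is connected to `j`. -/
def Connected (B : QMBasis A I) (i j : I) : Prop :=
  i = j ∨ ∃ (Xs : List (Tup I n)) (st : I ⊕ I),
    Xs ≠ [] ∧ (st = Sum.inl i ∨ st = Sum.inr i) ∧
    (∀ m, m < Xs.length → (chain B {st} (List.take m Xs)).Nonempty) ∧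
    Sum.inl j ∈ chain B {st} Xs

/-- The connection class `[i]` of `i`. -/
def cls (B : QMBasis A I) (i : I) : Set I := {j | B.Connected i j}

/-- `W_{[i]} = ⊕_{j ∈ [i]} 𝔽 e_j`. -/
def Wcls (B : QMBasis A I) (i : I) : Submodule F L :=
  Submodule.span F (B.e '' B.cls i)

/-- `V_{[i]} = (Σ_{i₁,…,iₙ ∈ [i]} 𝔽⟨e_{i₁},…,e_{iₙ}⟩) ∩ V`. -/
def Vcls (B : QMBasis A I) (i : I) : Submodule F L :=
  Submodule.span F {z : L | ∃ c : Fin (n + 2) → I,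
    (∀ t, c t ∈ B.cls i) ∧ z = A.bracket (fun t => B.e (c t))} ⊓ B.V

/-- `𝔍_{[i]} = V_{[i]} ⊕ W_{[i]}`. -/
def Jcls (B : QMBasis A I) (i : I) : Submodule F L := B.Vcls i ⊔ B.Wcls i

/-- `S` admits a quasi-multiplicative basis inherited from that of `L`:
`S = V_S ⊕ W_S` with `V_S ⊆ V` and `W_S ≠ 0` spanned by a subset of the `e i`. -/
def HasInheritedBasis (B : QMBasis A I) (S : Submodule F L) : Prop :=
  ∃ (V' : Submodule F L) (J' : Set I), V' ≤ B.V ∧ J'.Nonempty ∧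
    S = V' ⊔ Submodule.span F (B.e '' J')

/-- `V` is tight: `V = 0` or `V = Σ_{μ(i₁,…,iₙ) = {v}} 𝔽⟨e_{i₁},…,e_{iₙ}⟩`. -/
def Tight (B : QMBasis A I) : Prop :=
  B.V = ⊥ ∨
    B.V = Submodule.span F {z : L | ∃ c : Fin (n + 2) → I,
      ({x : Option I | ∃ σ, B.aMem σ (fun t => some (c t)) x} = {none}) ∧
      z = A.bracket (fun t => B.e (c t))}

/-- The set of elements represented by `u_{k}`: `u_k = e_k + e_{k̄}` (`= e` of the
underlying index, since `e_{j̄} = 0`) if `k ∉ {v, v̄}`, and `u_k = V` otherwise. -/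
def uSet (B : QMBasis A I) : Option I ⊕ Option I → Set L
  | Sum.inl none => (B.V : Set L)
  | Sum.inr none => (B.V : Set L)
  | Sum.inl (some i) => {B.e i}
  | Sum.inr (some i) => {B.e i}

/-- The full `(n+2)`-tuple `(k₁, …, kₙ)` over `𝔉 ∪ 𝔉̄` obtained from a first entry and
an admissible tuple. -/
def fullTup {I : Type} {n : ℕ} (k₁ : Option I ⊕ Option I) (X : Tup I n) :
    Fin (n + 2) → Option I ⊕ Option I :=
  Fin.cons k₁ (fun t => if X.1 then Sum.inr (X.2 t) else Sum.inl (X.2 t))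

/-- The basis is `μ`-quasi-multiplicative: whenever `i ∈ μ(k₁, …, kₙ)` then
`e i ∈ 𝔽⟨u_{k₁}, …, u_{kₙ}⟩_σ` for some `σ ∈ Sₙ`. -/
def MuQM (B : QMBasis A I) : Prop :=
  ∀ (k₁ : Option I ⊕ Option I) (X : Tup I n) (i : I),
    B.muMem k₁ X (some i) →
    ∃ (σ : Equiv.Perm (Fin (n + 2))) (z : Fin (n + 2) → L),
      (∀ t, z t ∈ B.uSet (fullTup k₁ X (σ t))) ∧
      B.e i ∈ Submodule.span F {A.bracket z}

end QMBasis
namespace QMBasis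

variable {F : Type} [Field F] {G : Type} [AddCommGroup G] [DecidableEq G]
    {L : Type} [AddCommGroup L] [Module F L] {n : ℕ} {I : Type}
    {A : ColorGLT F G L n}

/-! ### Chain and connection lemmas -/

lemma chain_append (B : QMBasis A I) (s : Set (I ⊕ I)) (l₁ l₂ : List (Tup I n)) :
    B.chain s (l₁ ++ l₂) = B.chain (B.chain s l₁) l₂ := by
  induction l₁ generalizing s with
  | nil => rfl
  | cons X r ih => simpa [chain] using ih (B.phi s X)

lemma phi_mono (B : QMBasis A I) {s s' : Set (I ⊕ I)} (h : s ⊆ s') (X : Tup I n) :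
    B.phi s X ⊆ B.phi s' X := by
  rintro p ⟨i, hi, j, hj, hm⟩; exact ⟨i, hi, j, h hj, hm⟩

lemma chain_mono (B : QMBasis A I) {s s' : Set (I ⊕ I)} (h : s ⊆ s') (l : List (Tup I n)) :
    B.chain s l ⊆ B.chain s' l := by
  induction l generalizing s s' with
  | nil => exact h
  | cons X r ih => exact ih (B.phi_mono h X)

lemma phi_pair (B : QMBasis A I) {s : Set (I ⊕ I)} {X : Tup I n} {a : I}
    (h : Sum.inl a ∈ B.phi s X) : Sum.inr a ∈ B.phi s X := by
  obtain ⟨i, hi, j, hj, hm⟩ := h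
  rcases hi with hi | hi
  · cases Sum.inl.inj hi; exact ⟨a, Or.inr rfl, j, hj, hm⟩
  · simp at hi

lemma chain_pair (B : QMBasis A I) {s : Set (I ⊕ I)} {a : I} {l : List (Tup I n)}
    (hl : l ≠ []) (h : Sum.inl a ∈ B.chain s l) : Sum.inr a ∈ B.chain s l := by
  induction l generalizing s with
  | nil => exact absurd rfl hl
  | cons X r ih =>
    cases r with
    | nil => exact B.phi_pair h
    | cons Y r' => exact ih (by simp) h

lemma conn_trans (B : QMBasis A I) {i j k : I} (hij : B.Connected i j)
    (hjk : B.Connected j k) : B.Connected i k := by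
  rcases hjk with rfl | ⟨Ys, st₂, hYs, hst₂, hne₂, hmem₂⟩
  · exact hij
  rcases hij with rfl | ⟨Xs, st₁, hXs, hst₁, hne₁, hmem₁⟩
  · exact Or.inr ⟨Ys, st₂, hYs, hst₂, hne₂, hmem₂⟩
  have hstm : st₂ ∈ B.chain {st₁} Xs := by
    rcases hst₂ with rfl | rfl
    · exact hmem₁
    · exact B.chain_pair hXs hmem₁
  refine Or.inr ⟨Xs ++ Ys, st₁, by simp [hXs], hst₁, ?_, ?_⟩
  · intro m hm
    rcases le_or_gt m Xs.length with h | h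
    · rw [List.take_append_of_le_length h]
      rcases eq_or_lt_of_le h with rfl | h'
      · rw [List.take_length]; exact ⟨_, hmem₁⟩
      · exact hne₁ m h'
    · rw [List.take_append, List.take_of_length_le h.le]
      rw [B.chain_append]
      refine Set.Nonempty.mono (B.chain_mono ?_ _) (hne₂ (m - Xs.length) ?_)
      · exact Set.singleton_subset_iff.2 hstm
      · simp only [List.length_append] at hm; omega
  · rw [B.chain_append]
    exact B.chain_mono (Set.singleton_subset_iff.2 hstm) Ys hmem₂

lemma conn_step (B : QMBasis A I) {i j m : I}
    (hij : B.Connected i j) (X : Tup I n)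
    (h : B.muMem (Sum.inl (some j)) X (some m) ∨ B.muMem (Sum.inr (some j)) X (some m)) :
    B.Connected i m := by
  refine B.conn_trans hij ?_
  have hone : ∀ st : I ⊕ I, (st = Sum.inl j ∨ st = Sum.inr j) →
      B.muMem (Sum.map some some st) X (some m) → B.Connected j m := by
    intro st hst hm
    refine Or.inr ⟨[X], st, by simp, hst, ?_, ?_⟩
    · intro m' hm'
      have : m' = 0 := by simp at hm'; omega
      subst this
      exact ⟨st, rfl⟩
    · exact ⟨m, Or.inl rfl, st, rfl, hm⟩
  rcases h with h | h
  · exact hone (Sum.inl j) (Or.inl rfl) h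
  · exact hone (Sum.inr j) (Or.inr rfl) h

lemma mkperm {N : ℕ} (a b : Fin (N + 2)) (hab : a ≠ b) :
    ∃ τ : Equiv.Perm (Fin (N + 2)), τ 0 = a ∧ τ 1 = b := by
  refine ⟨(Equiv.swap 1 (Equiv.swap 0 a b)).trans (Equiv.swap 0 a), ?_, ?_⟩
  · have hw : Equiv.swap 0 a b ≠ 0 := by
      intro h
      apply hab
      have h2 : b = Equiv.swap 0 a (Equiv.swap 0 a b) := (Equiv.swap_apply_self _ _ _).symm
      rw [h, Equiv.swap_apply_left] at h2
      exact h2.symm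
    simp only [Equiv.trans_apply]
    rw [Equiv.swap_apply_of_ne_of_ne Fin.zero_ne_one (Ne.symm hw), Equiv.swap_apply_left]
  · simp only [Equiv.trans_apply]
    rw [Equiv.swap_apply_left, Equiv.swap_apply_self]

lemma e_inj (B : QMBasis A I) : Function.Injective B.e :=
  B.e_indep.injective

/-! ### One-step connection lemmas -/

lemma mem_cls_of_step_inl (B : QMBasis A I) {i j m : I} (hij : B.Connected i j)
    (p : Fin (n + 2) → Option I) (s : Fin (n + 2)) (hps : p s = some j)
    (z : Fin (n + 2) → L) (hz : ∀ t, z t ∈ B.elemSet (p t)) (hnz : A.bracket z ≠ 0)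
    (H : ∀ z' : Fin (n + 2) → L, (∀ t, z' t ∈ B.elemSet (p t)) →
      A.bracket z' ∈ Submodule.span F {B.e m}) :
    B.Connected i m := by
  set τ := Equiv.swap (0 : Fin (n + 2)) s with hτ
  set c : Fin (n + 1) → Option I := fun t => p (τ t.succ) with hc
  have hC : ∀ u, (Fin.cons (some j) c : Fin (n + 2) → Option I) u = p (τ u) := by
    intro u
    induction u using Fin.cases with
    | zero =>
      rw [Fin.cons_zero, hτ, Equiv.swap_apply_left, hps]
    | succ v => rw [Fin.cons_succ]
  have hC' : ∀ t, (Fin.cons (some j) c : Fin (n + 2) → Option I) (τ⁻¹ t) = p t := by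
    intro t; rw [hC, ← Equiv.Perm.mul_apply, mul_inv_cancel, Equiv.Perm.one_apply]
  refine B.conn_step hij (false, c) (Or.inl ⟨τ⁻¹, ⟨z, ?_, hnz⟩, ?_, ?_⟩)
  · intro t; rw [hC']; exact hz t
  · intro z' hz'
    refine H z' (fun t => ?_)
    have := hz' t; rwa [hC'] at this
  · intro h; exact absurd h (by simp)

lemma mem_cls_of_step_inr (B : QMBasis A I) {i j : I} (hij : B.Connected i j)
    (q : Fin (n + 2) → I) (s t₁ : Fin (n + 2)) (hqs : q s = j)
    (hV : A.bracket (fun t => B.e (q t)) ∈ B.V)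
    (hnz : A.bracket (fun t => B.e (q t)) ≠ 0) :
    B.Connected i (q t₁) := by
  by_cases hts : t₁ = s
  · rw [hts, hqs]; exact hij
  obtain ⟨τ, hτ0, hτ1⟩ := mkperm t₁ s hts
  set c : Fin (n + 1) → Option I :=
    Fin.cons none (fun t : Fin n => some (q (τ t.succ.succ))) with hc
  have hC : ∀ u, (Fin.cons (some (q t₁))
      (Fin.cons (some j) (fun t : Fin n => c ((0 : Fin (n + 1)).succAbove t)))
        : Fin (n + 2) → Option I) u = some (q (τ u)) := by
    intro u
    induction u using Fin.cases with
    | zero => rw [Fin.cons_zero, hτ0]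
    | succ v =>
      rw [Fin.cons_succ]
      induction v using Fin.cases with
      | zero =>
        rw [Fin.cons_zero, Fin.succ_zero_eq_one', hτ1, hqs]
      | succ w =>
        rw [Fin.cons_succ]
        simp only [Fin.zero_succAbove, hc, Fin.cons_succ]
  have hC' : ∀ t, (Fin.cons (some (q t₁))
      (Fin.cons (some j) (fun t : Fin n => c ((0 : Fin (n + 1)).succAbove t)))
        : Fin (n + 2) → Option I) (τ⁻¹ t) = some (q t) := by
    intro t; rw [hC, ← Equiv.Perm.mul_apply, mul_inv_cancel, Equiv.Perm.one_apply]
  have hc0 : c 0 = none := rfl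
  refine B.conn_step hij (false, c) (Or.inr ⟨0, τ⁻¹, ⟨fun t => B.e (q t), ?_, hnz⟩, ?_, ?_⟩)
  · intro t; rw [hC']; exact rfl
  · intro z' hz'
    have hz'' : z' = fun t => B.e (q t) := by
      funext t
      have := hz' t; rw [hC'] at this; exact this
    rw [hc0, hz'']; exact hV
  · intro _
    left
    intro t; rw [hC]; rfl

end QMBasis
namespace QMBasis

variable {F : Type} [Field F] {G : Type} [AddCommGroup G] [DecidableEq G]
    {L : Type} [AddCommGroup L] [Module F L] {n : ℕ} {I : Type}
    {A : ColorGLT F G L n}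

lemma wcls_le_jcls (B : QMBasis A I) (i : I) : B.Wcls i ≤ B.Jcls i := le_sup_right
lemma vcls_le_jcls (B : QMBasis A I) (i : I) : B.Vcls i ≤ B.Jcls i := le_sup_left

lemma span_e_le_wcls (B : QMBasis A I) {i m : I} (hm : B.Connected i m) :
    Submodule.span F {B.e m} ≤ B.Wcls i := by
  rw [Submodule.span_le, Set.singleton_subset_iff]
  exact Submodule.subset_span ⟨m, hm, rfl⟩

lemma claim1 (B : QMBasis A I) (i : I) (z : Fin (n + 2) → L) (s : Fin (n + 2)) {j : I}
    (hj : B.Connected i j) (hzs : z s = B.e j)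
    (hpat : ∀ t, z t ∈ B.V ∨ ∃ k, z t = B.e k) :
    A.bracket z ∈ B.Jcls i := by
  by_cases hnz : A.bracket z = 0
  · rw [hnz]; exact zero_mem _
  classical
  set p : Fin (n + 2) → Option I :=
    fun t => if h : ∃ k, z t = B.e k then some h.choose else none with hp
  have hzp : ∀ t, z t ∈ B.elemSet (p t) := by
    intro t
    by_cases h : ∃ k, z t = B.e k
    · simp only [hp, dif_pos h]; exact h.choose_spec
    · simp only [hp, dif_neg h]
      rcases hpat t with hv | he
      · exact hv
      · exact absurd he h
  have hps : p s = some j := by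
    have h : ∃ k, z s = B.e k := ⟨j, hzs⟩
    have h2 : h.choose = j := B.e_inj (by rw [← h.choose_spec, hzs])
    simp only [hp, dif_pos h, h2]
  by_cases hall : ∀ t, (p t).isSome
  · -- all entries are basis vectors
    set q : Fin (n + 2) → I := fun t => (p t).get (hall t) with hq
    have hpq : ∀ t, p t = some (q t) := fun t => (Option.some_get (hall t)).symm
    have hzq : z = fun t => B.e (q t) := by
      funext t
      have := hzp t
      rw [hpq t] at this
      exact this
    have hqs : q s = j := by
      have := hpq s
      rw [hps] at this
      exact (Option.some_inj.1 this).symm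
    rcases B.qm1 q with ⟨m, hm⟩ | hVv
    · have H : ∀ z' : Fin (n + 2) → L, (∀ t, z' t ∈ B.elemSet (p t)) →
          A.bracket z' ∈ Submodule.span F {B.e m} := by
        intro z' hz'
        have hz'' : z' = fun t => B.e (q t) := by
          funext t
          have := hz' t
          rw [hpq t] at this
          exact this
        rw [hz'']; exact hm
      have hconn : B.Connected i m := B.mem_cls_of_step_inl hj p s hps z hzp hnz H
      exact B.wcls_le_jcls i (B.span_e_le_wcls hconn (H z hzp))
    · have hVb : A.bracket z ∈ B.V := by rw [hzq]; exact hVv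
      have hcls : ∀ t, q t ∈ B.cls i := fun t =>
        B.mem_cls_of_step_inr hj q s t hqs (hzq ▸ hVb) (hzq ▸ hnz)
      refine B.vcls_le_jcls i (Submodule.mem_inf.2 ⟨?_, hVb⟩)
      exact Submodule.subset_span ⟨q, hcls, by rw [hzq]⟩
  · -- some entry lies in V
    push_neg at hall
    obtain ⟨t₀, ht₀⟩ := hall
    set S : Finset (Fin (n + 2)) := Finset.univ.filter (fun t => (p t).isSome) with hS
    have hS1 : S.Nonempty := ⟨s, by simp [hS, hps]⟩
    have hS2 : S ≠ Finset.univ := by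
      intro h
      apply ht₀
      have : t₀ ∈ S := h ▸ Finset.mem_univ t₀
      simpa [hS] using this
    obtain ⟨m, hm⟩ := B.qm2 1 S hS1 hS2 (fun t => (p t).getD j)
    have H : ∀ z' : Fin (n + 2) → L, (∀ t, z' t ∈ B.elemSet (p t)) →
        A.bracket z' ∈ Submodule.span F {B.e m} := by
      intro z' hz'
      have := hm z' ?_ ?_
      · simpa using this
      · intro t ht
        have hts : (p t).isSome := by simpa [hS] using ht
        obtain ⟨k, hk⟩ := Option.isSome_iff_exists.1 hts
        have := hz' t
        rw [hk] at this
        rw [this, hk]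
        rfl
      · intro t ht
        have hts : ¬ (p t).isSome := by simpa [hS] using ht
        have hk : p t = none := Option.not_isSome_iff_eq_none.1 hts
        have := hz' t
        rwa [hk] at this
    have hconn : B.Connected i m := B.mem_cls_of_step_inl hj p s hps z hzp hnz H
    exact B.wcls_le_jcls i (B.span_e_le_wcls hconn (H z hzp))

end QMBasis
namespace QMBasis

variable {F : Type} [Field F] {G : Type} [AddCommGroup G] [DecidableEq G]
    {L : Type} [AddCommGroup L] [Module F L] {n : ℕ} {I : Type}
    {A : ColorGLT F G L n}

lemma mem_of_basis_slot_aux (B : QMBasis A I) (i : I) (T : Finset (Fin (n + 2))) :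
    ∀ (z : Fin (n + 2) → L) (s : Fin (n + 2)) (j : I),
    B.Connected i j → z s = B.e j →
    (∀ t, t ∉ T → t = s ∨ z t ∈ B.V ∨ ∃ k, z t = B.e k) →
    A.bracket z ∈ B.Jcls i := by
  classical
  induction T using Finset.induction_on with
  | empty =>
    intro z s j hj hzs hpat
    refine B.claim1 i z s hj hzs (fun t => ?_)
    rcases hpat t (Finset.notMem_empty t) with rfl | h
    · exact Or.inr ⟨j, hzs⟩
    · exact h
  | @insert a T ha ih =>
    intro z s j hj hzs hpat
    by_cases has : a = s
    · refine ih z s j hj hzs (fun t ht => ?_)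
      by_cases hta : t = a
      · exact Or.inl (hta.trans has)
      · exact hpat t (by simp [Finset.mem_insert, hta, ht])
    have hsa : s ≠ a := fun h => has h.symm
    have hmem : z a ∈ B.V ⊔ B.W := by rw [B.compl.sup_eq_top]; exact Submodule.mem_top
    obtain ⟨v, hv, u, hu, hvu⟩ := Submodule.mem_sup.1 hmem
    have hz : z = Function.update z a (v + u) := by rw [hvu, Function.update_eq_self]
    rw [hz, MultilinearMap.map_update_add]
    refine add_mem ?_ ?_
    · refine ih (Function.update z a v) s j hj (by rw [Function.update_of_ne hsa]; exact hzs)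
        (fun t ht => ?_)
      by_cases hta : t = a
      · subst hta; rw [Function.update_self]; exact Or.inr (Or.inl hv)
      · rw [Function.update_of_ne hta]
        exact hpat t (by simp [Finset.mem_insert, hta, ht])
    · have hu' : u ∈ Submodule.span F (Set.range B.e) := by rw [B.e_span]; exact hu
      refine Submodule.span_induction
        (p := fun x _ => A.bracket (Function.update z a x) ∈ B.Jcls i) ?_ ?_ ?_ ?_ hu'
      · rintro x ⟨k, rfl⟩
        refine ih (Function.update z a (B.e k)) s j hj
          (by rw [Function.update_of_ne hsa]; exact hzs) (fun t ht => ?_)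
        by_cases hta : t = a
        · subst hta; rw [Function.update_self]; exact Or.inr (Or.inr ⟨k, rfl⟩)
        · rw [Function.update_of_ne hta]
          exact hpat t (by simp [Finset.mem_insert, hta, ht])
      · simp only [MultilinearMap.map_update_zero]; exact zero_mem _
      · intro x y _ _ hx hy
        simp only [MultilinearMap.map_update_add]; exact add_mem hx hy
      · intro r x _ hx
        simp only [MultilinearMap.map_update_smul]; exact Submodule.smul_mem _ _ hx

lemma mem_of_basis_slot (B : QMBasis A I) (i : I) (z : Fin (n + 2) → L) (s : Fin (n + 2))
    {j : I} (hj : B.Connected i j) (hzs : z s = B.e j) : A.bracket z ∈ B.Jcls i :=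
  B.mem_of_basis_slot_aux i Finset.univ z s j hj hzs
    (fun t ht => absurd (Finset.mem_univ t) ht)

lemma mem_of_vgen_slot_aux (B : QMBasis A I) (i : I) (T : Finset (Fin (n + 2))) :
    ∀ (z : Fin (n + 2) → L) (s : Fin (n + 2)) (c : Fin (n + 2) → I),
    (∀ t, c t ∈ B.cls i) → z s = A.bracket (fun t => B.e (c t)) →
    (∀ t, t ∉ T → t = s ∨ ∃ g, z t ∈ A.grading g) →
    A.bracket z ∈ B.Jcls i := by
  classical
  induction T using Finset.induction_on with
  | empty =>
    intro z s c hc hzs hpat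
    have hy : ∀ t : Fin (n + 1), ∃ g, z (s.succAbove t) ∈ A.grading g := by
      intro t
      rcases hpat (s.succAbove t) (Finset.notMem_empty _) with h | h
      · exact absurd h (Fin.succAbove_ne s t)
      · exact h
    choose gy hgy using hy
    have key := A.glt s (fun t => B.deg (c t)) gy (fun t => B.e (c t))
      (fun t => z (s.succAbove t)) (fun t => B.e_homog (c t)) hgy
    have hins : Fin.insertNth s (A.bracket (fun t => B.e (c t)))
        (fun t => z (s.succAbove t)) = z := by
      rw [← hzs]
      exact Fin.insertNth_self_removeNth s z
    rw [hins] at key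
    rw [key]
    refine Submodule.sum_mem _ (fun i1 _ => Submodule.sum_mem _ (fun j1 _ =>
      Submodule.sum_mem _ (fun σ₁ _ => Submodule.sum_mem _ (fun σ₂ _ =>
        Submodule.smul_mem _ _ ?_))))
    obtain ⟨t₀, ht₀⟩ := exists_ne i1
    exact B.mem_of_basis_slot i _ t₀ (hc (σ₁ t₀))
      (Function.update_of_ne ht₀ _ _)
  | @insert a T ha ih =>
    intro z s c hc hzs hpat
    by_cases has : a = s
    · refine ih z s c hc hzs (fun t ht => ?_)
      by_cases hta : t = a
      · exact Or.inl (hta.trans has)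
      · exact hpat t (by simp [Finset.mem_insert, hta, ht])
    have hsa : s ≠ a := fun h => has h.symm
    have hz : z a ∈ ⨆ g, A.grading g := by
      rw [A.isInternal.submodule_iSup_eq_top]; exact Submodule.mem_top
    have hgoal := Submodule.iSup_induction (p := A.grading)
      (motive := fun x => A.bracket (Function.update z a x) ∈ B.Jcls i) hz ?_ ?_ ?_
    · have hgoal' : A.bracket (Function.update z a (z a)) ∈ B.Jcls i := hgoal
      rwa [Function.update_eq_self] at hgoal'
    · intro g x hx
      refine ih (Function.update z a x) s c hc
        (by rw [Function.update_of_ne hsa]; exact hzs) (fun t ht => ?_)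
      by_cases hta : t = a
      · subst hta; rw [Function.update_self]; exact Or.inr ⟨g, hx⟩
      · rw [Function.update_of_ne hta]
        exact hpat t (by simp [Finset.mem_insert, hta, ht])
    · simp only [MultilinearMap.map_update_zero]; exact zero_mem _
    · intro x y hx hy
      simp only [MultilinearMap.map_update_add]; exact add_mem hx hy

lemma mem_of_vgen_slot (B : QMBasis A I) (i : I) (z : Fin (n + 2) → L) (s : Fin (n + 2))
    (c : Fin (n + 2) → I) (hc : ∀ t, c t ∈ B.cls i)
    (hzs : z s = A.bracket (fun t => B.e (c t))) : A.bracket z ∈ B.Jcls i :=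
  B.mem_of_vgen_slot_aux i Finset.univ z s c hc hzs
    (fun t ht => absurd (Finset.mem_univ t) ht)

lemma main_slot (B : QMBasis A I) (i : I) (w : Fin (n + 2) → L) (s : Fin (n + 2))
    (hw : w s ∈ B.Jcls i) : A.bracket w ∈ B.Jcls i := by
  classical
  obtain ⟨v, hv, u, hu, hvu⟩ := Submodule.mem_sup.1 hw
  have hz : w = Function.update w s (v + u) := by rw [hvu, Function.update_eq_self]
  rw [hz, MultilinearMap.map_update_add]
  refine add_mem ?_ ?_
  · have hv' : v ∈ Submodule.span F {z : L | ∃ c : Fin (n + 2) → I,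
        (∀ t, c t ∈ B.cls i) ∧ z = A.bracket (fun t => B.e (c t))} :=
      (Submodule.mem_inf.1 hv).1
    refine Submodule.span_induction
      (p := fun x _ => A.bracket (Function.update w s x) ∈ B.Jcls i) ?_ ?_ ?_ ?_ hv'
    · rintro x ⟨c, hc, rfl⟩
      exact B.mem_of_vgen_slot i _ s c hc (Function.update_self _ _ _)
    · simp only [MultilinearMap.map_update_zero]; exact zero_mem _
    · intro x y _ _ hx hy
      simp only [MultilinearMap.map_update_add]; exact add_mem hx hy
    · intro r x _ hx
      simp only [MultilinearMap.map_update_smul]; exact Submodule.smul_mem _ _ hx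
  · refine Submodule.span_induction
      (p := fun x _ => A.bracket (Function.update w s x) ∈ B.Jcls i) ?_ ?_ ?_ ?_ hu
    · rintro x ⟨k, hk, rfl⟩
      exact B.mem_of_basis_slot i _ s hk (Function.update_self _ _ _)
    · simp only [MultilinearMap.map_update_zero]; exact zero_mem _
    · intro x y _ _ hx hy
      simp only [MultilinearMap.map_update_add]; exact add_mem hx hy
    · intro r x _ hx
      simp only [MultilinearMap.map_update_smul]; exact Submodule.smul_mem _ _ hx

end QMBasis
namespace QMBasis

variable {F : Type} [Field F] {G : Type} [AddCommGroup G] [DecidableEq G]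
    {L : Type} [AddCommGroup L] [Module F L] {n : ℕ} {I : Type}
    {A : ColorGLT F G L n}

lemma graded_component_mem (B : QMBasis A I) (S : Submodule F L)
    (hS : S ≤ ⨆ g, S ⊓ A.grading g) {x : L} (hx : x ∈ S) (g : G) :
    (((LinearEquiv.ofBijective (DirectSum.coeLinearMap A.grading)
      A.isInternal).symm x g : A.grading g) : L) ∈ S := by
  set D := LinearEquiv.ofBijective (DirectSum.coeLinearMap A.grading) A.isInternal with hD
  have hx' : x ∈ ⨆ g, S ⊓ A.grading g := hS hx
  refine Submodule.iSup_induction (p := fun g => S ⊓ A.grading g)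
    (motive := fun y => ∀ g', ((D.symm y g' : A.grading g') : L) ∈ S) hx' ?_ ?_ ?_ g
  · intro h y hy g'
    have hyh : y ∈ A.grading h := (Submodule.mem_inf.1 hy).2
    by_cases hgh : h = g'
    · subst hgh
      rw [A.isInternal.ofBijective_coeLinearMap_of_mem hyh]
      exact (Submodule.mem_inf.1 hy).1
    · rw [A.isInternal.ofBijective_coeLinearMap_of_mem_ne hgh hyh]
      exact zero_mem _
  · intro g'
    rw [map_zero]
    simp only [DirectSum.zero_apply, ZeroMemClass.coe_zero]
    exact zero_mem _
  · intro y z hy hz g'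
    rw [map_add]
    simp only [DirectSum.add_apply, AddSubmonoid.coe_add]
    exact add_mem (hy g') (hz g')

lemma eq_sum_components (B : QMBasis A I) (x : L) :
    ∃ s : Finset G, x = ∑ g ∈ s, (((LinearEquiv.ofBijective
      (DirectSum.coeLinearMap A.grading) A.isInternal).symm x g : A.grading g) : L) := by
  classical
  set D := LinearEquiv.ofBijective (DirectSum.coeLinearMap A.grading) A.isInternal with hD
  refine ⟨(D.symm x).support, ?_⟩
  have hd := DirectSum.sum_support_of (D.symm x)
  calc x = D (D.symm x) := (D.apply_symm_apply x).symm
    _ = DirectSum.coeLinearMap A.grading (D.symm x) := rfl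
    _ = DirectSum.coeLinearMap A.grading (∑ g ∈ (D.symm x).support,
          DirectSum.of (fun g => A.grading g) g (D.symm x g)) := by rw [hd]
    _ = ∑ g ∈ (D.symm x).support, (((D.symm x) g : A.grading g) : L) := by
        rw [map_sum]
        exact Finset.sum_congr rfl (fun g _ => DirectSum.coeLinearMap_of _ g _)

lemma vgen_graded (B : QMBasis A I) (i : I) :
    Submodule.span F {z : L | ∃ c : Fin (n + 2) → I,
        (∀ t, c t ∈ B.cls i) ∧ z = A.bracket (fun t => B.e (c t))} ≤
      ⨆ g, Submodule.span F {z : L | ∃ c : Fin (n + 2) → I,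
        (∀ t, c t ∈ B.cls i) ∧ z = A.bracket (fun t => B.e (c t))} ⊓ A.grading g := by
  rw [Submodule.span_le]
  rintro x ⟨c, hc, rfl⟩
  refine SetLike.mem_coe.2 (Submodule.mem_iSup_of_mem (∑ t, B.deg (c t))
    (Submodule.mem_inf.2 ⟨?_, ?_⟩))
  · exact Submodule.subset_span ⟨c, hc, rfl⟩
  · exact A.bracket_graded _ _ (fun t => B.e_homog (c t))

lemma jcls_graded (B : QMBasis A I) (i : I) :
    B.Jcls i = ⨆ g, B.Jcls i ⊓ A.grading g := by
  classical
  refine le_antisymm ?_ (iSup_le fun g => inf_le_left)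
  refine sup_le ?_ ?_
  · intro x hx
    obtain ⟨s, hs⟩ := B.eq_sum_components x
    rw [hs]
    refine Submodule.sum_mem _ (fun g _ => Submodule.mem_iSup_of_mem g
      (Submodule.mem_inf.2 ⟨?_, Submodule.coe_mem _⟩))
    have h1 := B.graded_component_mem _ (B.vgen_graded i) (Submodule.mem_inf.1 hx).1 g
    have h2 := B.graded_component_mem B.V B.V_graded.le (Submodule.mem_inf.1 hx).2 g
    exact Submodule.mem_sup_left (Submodule.mem_inf.2 ⟨h1, h2⟩)
  · rw [Wcls, Submodule.span_le]
    rintro x ⟨jj, hjj, rfl⟩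
    refine SetLike.mem_coe.2 (Submodule.mem_iSup_of_mem (B.deg jj)
      (Submodule.mem_inf.2 ⟨?_, B.e_homog jj⟩))
    exact Submodule.mem_sup_right (Submodule.subset_span ⟨jj, hjj, rfl⟩)

end QMBasis

theorem stmt5 {F : Type} [Field F] {G : Type} [AddCommGroup G] [DecidableEq G]
    {L : Type} [AddCommGroup L] [Module F L] {n : ℕ} {I : Type}
    {A : ColorGLT F G L n} (B : QMBasis A I) (i : I) :
    A.IsIdeal (B.Jcls i) ∧ B.HasInheritedBasis (B.Jcls i) := by
  refine ⟨⟨B.jcls_graded i, ?_⟩, ?_⟩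
  · intro σ x hx
    refine B.main_slot i (fun t => x (σ t)) (σ⁻¹ 0) ?_
    simpa using hx
  · exact ⟨B.Vcls i, B.cls i, inf_le_right, ⟨i, Or.inl rfl⟩, rfl⟩
end

section
/- Let L = V ⊕ W be a color gLt-algebra admitting a quasi-multiplicative basis {e_i}_{i∈I} of W ≠ 0. If L is simple (its only color gLt-ideals are 0 and L), then any two elements of the index set I are connected, i.e. the connection equivalence relation on I has exactly one class. -/
set_option maxHeartbeats 1000000

section Aux

open Function

variable {F : Type} [Field F] {G : Type} [AddCommGroup G] [DecidableEq G]
    {L : Type} [AddCommGroup L] [Module F L] {n : ℕ} {I : Type}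
    {A : ColorGLT F G L n}

/-- Multilinear maps send span-tuples into a submodule if they send generator-tuples there. -/
theorem aux_ml {N : ℕ} (f : MultilinearMap F (fun _ : Fin N => L) L) (S : Fin N → Set L)
    (T : Submodule F L) (hcore : ∀ w : Fin N → L, (∀ t, w t ∈ S t) → f w ∈ T) :
    ∀ z : Fin N → L, (∀ t, z t ∈ Submodule.span F (S t)) → f z ∈ T := by
  classical
  suffices aux : ∀ k : ℕ, ∀ z : Fin N → L,
      (∀ t : Fin N, (t : ℕ) < k → z t ∈ Submodule.span F (S t)) →
      (∀ t : Fin N, k ≤ (t : ℕ) → z t ∈ S t) → f z ∈ T by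
    intro z hz
    exact aux N z (fun t _ => hz t) (fun t ht => absurd ht (not_le.mpr t.isLt))
  intro k
  induction k with
  | zero => exact fun z h1 h2 => hcore z (fun t => h2 t (Nat.zero_le _))
  | succ k ih =>
    intro z h1 h2
    by_cases hk : k < N
    · set kf : Fin N := ⟨k, hk⟩ with hkf
      have hzk : z kf ∈ Submodule.span F (S kf) := h1 kf (Nat.lt_succ_self k)
      have main : f (Function.update z kf (z kf)) ∈ T := by
        refine Submodule.span_induction (p := fun x _ => f (Function.update z kf x) ∈ T)
          ?_ ?_ ?_ ?_ hzk
        · intro x hx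
          refine ih (Function.update z kf x) ?_ ?_
          · intro t ht
            have htk : t ≠ kf := by
              intro h; rw [h] at ht; exact absurd ht (lt_irrefl _)
            rw [Function.update_of_ne htk]
            exact h1 t (Nat.lt_succ_of_lt ht)
          · intro t ht
            by_cases htk : t = kf
            · rw [htk, Function.update_self]; exact hx
            · rw [Function.update_of_ne htk]
              refine h2 t ?_
              have : (t : ℕ) ≠ k := fun h => htk (Fin.ext h)
              omega
        · show f (Function.update z kf 0) ∈ T
          rw [f.map_update_zero]; exact zero_mem _
        · intro x y _ _ hpx hpy
          show f (Function.update z kf (x + y)) ∈ T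
          rw [f.map_update_add]; exact add_mem hpx hpy
        · intro a x _ hpx
          show f (Function.update z kf (a • x)) ∈ T
          rw [f.map_update_smul]; exact Submodule.smul_mem _ _ hpx
      rwa [Function.update_eq_self] at main
    · refine ih z (fun t _ => h1 t ?_) (fun t ht => absurd ht ?_)
      · have := t.isLt; omega
      · have := t.isLt; omega

namespace QMBasis

variable (B : QMBasis A I)

theorem aux_chain_append (s : Set (I ⊕ I)) (l l' : List (Tup I n)) :
    B.chain s (l ++ l') = B.chain (B.chain s l) l' := by
  induction l generalizing s with
  | nil => rfl
  | cons X r ih => exact ih (B.phi s X)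

theorem aux_mem_phi_inl {J : Set (I ⊕ I)} {X : Tup I n} {a : I} :
    Sum.inl a ∈ B.phi J X ↔ ∃ j ∈ J, B.muMem (Sum.map some some j) X (some a) := by
  constructor
  · rintro ⟨i', hi' | hi', j, hj, hmu⟩
    · cases hi'; exact ⟨j, hj, hmu⟩
    · cases hi'
  · rintro ⟨j, hj, hmu⟩
    exact ⟨a, Or.inl rfl, j, hj, hmu⟩

theorem aux_mem_phi_inr {J : Set (I ⊕ I)} {X : Tup I n} {a : I} :
    Sum.inr a ∈ B.phi J X ↔ ∃ j ∈ J, B.muMem (Sum.map some some j) X (some a) := by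
  constructor
  · rintro ⟨i', hi' | hi', j, hj, hmu⟩
    · cases hi'
    · cases hi'; exact ⟨j, hj, hmu⟩
  · rintro ⟨j, hj, hmu⟩
    exact ⟨a, Or.inr rfl, j, hj, hmu⟩

theorem aux_conn_refl (i : I) : B.Connected i i := Or.inl rfl

/-- Extending a connection by one `μ`-step. -/
theorem aux_conn_step {i m : I} (hm : B.Connected i m) (X : Tup I n) (p : I)
    (h : B.muMem (Sum.inl (some m)) X (some p) ∨ B.muMem (Sum.inr (some m)) X (some p)) :
    B.Connected i p := by
  rcases hm with rfl | ⟨Xs, st, hne, hst, hint, hmem⟩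
  · -- start a fresh chain of length one
    rcases h with h | h
    · refine Or.inr ⟨[X], Sum.inl i, by simp, Or.inl rfl, ?_, ?_⟩
      · intro m' hm'
        have hm0 : m' = 0 := Nat.lt_one_iff.mp hm'
        subst hm0
        exact ⟨Sum.inl i, rfl⟩
      · show Sum.inl p ∈ B.phi {Sum.inl i} X
        exact (B.aux_mem_phi_inl).mpr ⟨Sum.inl i, rfl, h⟩
    · refine Or.inr ⟨[X], Sum.inr i, by simp, Or.inr rfl, ?_, ?_⟩
      · intro m' hm'
        have hm0 : m' = 0 := Nat.lt_one_iff.mp hm'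
        subst hm0
        exact ⟨Sum.inr i, rfl⟩
      · show Sum.inl p ∈ B.phi {Sum.inr i} X
        exact (B.aux_mem_phi_inl).mpr ⟨Sum.inr i, rfl, h⟩
  · -- extend the existing chain
    have hch : B.chain {st} (Xs ++ [X]) = B.phi (B.chain {st} Xs) X := by
      rw [B.aux_chain_append]; rfl
    have hsumm : ∃ j ∈ B.chain {st} Xs, B.muMem (Sum.map some some j) X (some p) := by
      rcases h with h | h
      · exact ⟨Sum.inl m, hmem, h⟩
      · refine ⟨Sum.inr m, ?_, h⟩
        rcases List.eq_nil_or_concat Xs with rfl | ⟨l, b, hXs⟩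
        · exact absurd rfl hne
        · rw [List.concat_eq_append] at hXs
          subst hXs
          have hl : B.chain {st} (l ++ [b]) = B.phi (B.chain {st} l) b := by
            rw [B.aux_chain_append]; rfl
          rw [hl] at hmem ⊢
          rcases (B.aux_mem_phi_inl).mp hmem with ⟨j, hj, hmu⟩
          exact (B.aux_mem_phi_inr).mpr ⟨j, hj, hmu⟩
    refine Or.inr ⟨Xs ++ [X], st, by simp, hst, ?_, ?_⟩
    · intro m' hm'
      rw [List.length_append, List.length_singleton] at hm'
      have hm'' : m' ≤ Xs.length := by omega
      rw [List.take_append_of_le_length hm'']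
      rcases lt_or_eq_of_le hm'' with hlt | heq
      · exact hint m' hlt
      · rw [heq, List.take_length]
        exact ⟨Sum.inl m, hmem⟩
    · rw [hch]
      exact (B.aux_mem_phi_inl).mpr hsumm

/-- If all products matching a pattern (with an `[i]`-entry) land in the line `F e_p`,
and some such product is nonzero, then `p` is connected to `i`. -/
theorem aux_conn_target {i : I} (ct : Fin (n + 2) → Option I) (s₀ : Fin (n + 2)) (m p : I)
    (h0 : ct s₀ = some m) (hm : B.Connected i m)
    (hw : ∃ z : Fin (n + 2) → L, (∀ t, z t ∈ B.elemSet (ct t)) ∧ A.bracket z ≠ 0)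
    (hall : ∀ z : Fin (n + 2) → L, (∀ t, z t ∈ B.elemSet (ct t)) →
      A.bracket z ∈ Submodule.span F {B.e p}) :
    B.Connected i p := by
  classical
  set ρ : Equiv.Perm (Fin (n + 2)) := Equiv.swap 0 s₀ with hρ
  have hρ0 : ρ 0 = s₀ := Equiv.swap_apply_left 0 s₀
  set cX : Fin (n + 1) → Option I := fun u => ct (ρ u.succ) with hcX
  have hG : ∀ s, (Fin.cons (some m) cX : Fin (n + 2) → Option I) s = ct (ρ s) := by
    intro s
    refine Fin.cases ?_ ?_ s
    · rw [Fin.cons_zero, hρ0, h0]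
    · intro u; rw [Fin.cons_succ]
  have hμ : B.muMem (Sum.inl (some m)) ((false, cX) : Tup I n) (some p) := by
    refine ⟨ρ.symm, ⟨?_, ?_, ?_⟩⟩
    · rcases hw with ⟨z, hz, hz0⟩
      refine ⟨z, fun t => ?_, hz0⟩
      rw [hG, Equiv.apply_symm_apply]
      exact hz t
    · intro z hz
      refine hall z (fun t => ?_)
      have := hz t
      rwa [hG, Equiv.apply_symm_apply] at this
    · intro h; exact absurd h (Option.some_ne_none p)
  exact B.aux_conn_step hm _ p (Or.inl hμ)

/-- If all products matching an all-basis pattern (with an `[i]`-entry) land in `V`,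
and the product is nonzero, then every index of the pattern is connected to `i`. -/
theorem aux_conn_entries {i : I} (ct : Fin (n + 2) → Option I) (s₀ : Fin (n + 2)) (m : I)
    (h0 : ct s₀ = some m) (hm : B.Connected i m)
    (hsome : ∀ t, (ct t).isSome)
    (hw : ∃ z : Fin (n + 2) → L, (∀ t, z t ∈ B.elemSet (ct t)) ∧ A.bracket z ≠ 0)
    (hall : ∀ z : Fin (n + 2) → L, (∀ t, z t ∈ B.elemSet (ct t)) → A.bracket z ∈ B.V)
    (s₁ : Fin (n + 2)) (k : I) (h1 : ct s₁ = some k) :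
    B.Connected i k := by
  classical
  by_cases hss : s₁ = s₀
  · rw [hss, h0] at h1
    cases h1; exact hm
  · have hs₀1 : s₀ ≠ s₁ := fun h => hss h.symm
    set sw0 : Equiv.Perm (Fin (n + 2)) := Equiv.swap 0 s₁ with hsw0
    set sw1 : Equiv.Perm (Fin (n + 2)) := Equiv.swap 1 (sw0 s₀) with hsw1
    set ρ : Equiv.Perm (Fin (n + 2)) := sw1.trans sw0 with hρ
    have hρ0 : ρ 0 = s₁ := by
      have h01 : (0 : Fin (n + 2)) ≠ 1 := Fin.zero_ne_one
      have h0sw : (0 : Fin (n + 2)) ≠ sw0 s₀ := by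
        intro h
        have : sw0 0 = s₀ := by rw [h, Equiv.swap_apply_self]
        rw [Equiv.swap_apply_left] at this
        exact hss this
      show sw0 (sw1 0) = s₁
      rw [hsw1, Equiv.swap_apply_of_ne_of_ne h01 h0sw, hsw0, Equiv.swap_apply_left]
    have hρ1 : ρ 1 = s₀ := by
      show sw0 (sw1 1) = s₀
      rw [hsw1, Equiv.swap_apply_left, Equiv.swap_apply_self]
    set cX : Fin (n + 1) → Option I := Fin.cons none (fun u : Fin n => ct (ρ u.succ.succ))
      with hcX
    have hG : ∀ s, (Fin.cons (some k) (Fin.cons (some m)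
        (fun t : Fin n => cX ((0 : Fin (n + 1)).succAbove t))) : Fin (n + 2) → Option I) s
        = ct (ρ s) := by
      intro s
      refine Fin.cases ?_ ?_ s
      · rw [Fin.cons_zero, hρ0, h1]
      · intro u
        rw [Fin.cons_succ]
        refine Fin.cases ?_ ?_ u
        · rw [Fin.cons_zero, Fin.succ_zero_eq_one, hρ1, h0]
        · intro v
          rw [Fin.cons_succ, hcX]
          rw [Fin.succAbove_zero]
          rw [Fin.cons_succ]
    have hμ : B.muMem (Sum.inr (some m)) ((false, cX) : Tup I n) (some k) := by
      refine ⟨0, ρ.symm, ?_, ?_, ?_⟩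
      · rcases hw with ⟨z, hz, hz0⟩
        refine ⟨z, fun t => ?_, hz0⟩
        rw [hG, Equiv.apply_symm_apply]
        exact hz t
      · intro z hz
        have hz' : ∀ t, z t ∈ B.elemSet (ct t) := by
          intro t
          have := hz t
          rwa [hG, Equiv.apply_symm_apply] at this
        show A.bracket z ∈ B.targetSet (cX 0)
        rw [hcX, Fin.cons_zero]
        exact hall z hz'
      · intro _
        refine Or.inl (fun t => ?_)
        rw [hG]
        exact hsome (ρ t)
    exact B.aux_conn_step hm _ k (Or.inr hμ)

/-- Master classification of a product matching a pattern with an `[i]`-entry. -/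
theorem aux_master {i : I} (ct : Fin (n + 2) → Option I) (s₀ : Fin (n + 2)) (m : I)
    (h0 : ct s₀ = some m) (hm : B.Connected i m)
    (z : Fin (n + 2) → L) (hz : ∀ t, z t ∈ B.elemSet (ct t)) :
    (A.bracket z ∈ B.V ∧ (∃ c : Fin (n + 2) → I, (∀ t, ct t = some (c t)) ∧
        (∀ t, z t = B.e (c t)) ∧ (A.bracket z ≠ 0 → ∀ t, B.Connected i (c t)))) ∨
    (∃ p, A.bracket z ∈ Submodule.span F {B.e p} ∧ (A.bracket z ≠ 0 → B.Connected i p)) := by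
  classical
  by_cases hall : ∀ t, (ct t).isSome
  · set c : Fin (n + 2) → I := fun t => (ct t).get (hall t) with hc
    have hct : ∀ t, ct t = some (c t) := fun t => (Option.some_get (hall t)).symm
    have hforce : ∀ z' : Fin (n + 2) → L, (∀ t, z' t ∈ B.elemSet (ct t)) →
        z' = fun t => B.e (c t) := by
      intro z' hz'
      funext t
      have := hz' t
      rw [hct t] at this
      exact this
    have hzc : z = fun t => B.e (c t) := hforce z hz
    rcases B.qm1 c with ⟨p, hp⟩ | hpV
    · refine Or.inr ⟨p, by rw [hzc]; exact hp, fun hz0 => ?_⟩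
      refine B.aux_conn_target ct s₀ m p h0 hm ⟨z, hz, hz0⟩ ?_
      intro z' hz'
      rw [hforce z' hz']
      exact hp
    · refine Or.inl ⟨by rw [hzc]; exact hpV, c, hct, fun t => by rw [hzc], fun hz0 t => ?_⟩
      refine B.aux_conn_entries ct s₀ m h0 hm hall ⟨z, hz, hz0⟩ ?_ t (c t) (hct t)
      intro z' hz'
      rw [hforce z' hz']
      exact hpV
  · push_neg at hall
    rcases hall with ⟨t₁, ht₁⟩
    have hct₁ : ct t₁ = none := Option.not_isSome_iff_eq_none.mp ht₁
    set Sset : Finset (Fin (n + 2)) := Finset.univ.filter (fun t => (ct t).isSome) with hSset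
    have hs₀S : s₀ ∈ Sset := by
      rw [hSset, Finset.mem_filter]
      exact ⟨Finset.mem_univ _, by rw [h0]; rfl⟩
    have hSne : Sset.Nonempty := ⟨s₀, hs₀S⟩
    have hSnu : Sset ≠ Finset.univ := by
      intro h
      have : t₁ ∈ Sset := h ▸ Finset.mem_univ t₁
      rw [hSset, Finset.mem_filter] at this
      exact ht₁ this.2
    set ind : Fin (n + 2) → I := fun t => (ct t).getD i with hind
    rcases B.qm2 1 Sset hSne hSnu ind with ⟨p, hp⟩
    have hall' : ∀ z' : Fin (n + 2) → L, (∀ t, z' t ∈ B.elemSet (ct t)) →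
        A.bracket z' ∈ Submodule.span F {B.e p} := by
      intro z' hz'
      have h1 : ∀ t ∈ Sset, z' t = B.e (ind t) := by
        intro t ht
        rw [hSset, Finset.mem_filter] at ht
        rcases Option.isSome_iff_exists.mp ht.2 with ⟨k, hk⟩
        have hzt := hz' t
        rw [hk] at hzt
        have hzt' : z' t = B.e k := hzt
        rw [hzt', hind]
        simp [hk]
      have h2 : ∀ t ∉ Sset, z' t ∈ B.V := by
        intro t ht
        rw [hSset, Finset.mem_filter] at ht
        push_neg at ht
        have hnone : ct t = none := by
          by_cases hs : (ct t).isSome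
          · exact absurd hs (ht (Finset.mem_univ t))
          · exact Option.not_isSome_iff_eq_none.mp hs
        have := hz' t
        rw [hnone] at this
        exact this
      have := hp z' h1 h2
      simpa using this
    exact Or.inr ⟨p, hall' z hz, fun hz0 =>
      B.aux_conn_target ct s₀ m p h0 hm ⟨z, hz, hz0⟩ hall'⟩

/-- The candidate ideal `𝔍_{[i]}` (in generator form). -/
def JJ (i : I) : Submodule F L :=
  Submodule.span F {z : L | z ∈ B.V ∧ ∃ c : Fin (n + 2) → I,
      (∀ t, B.Connected i (c t)) ∧ z = A.bracket (fun t => B.e (c t))} ⊔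
    Submodule.span F (B.e '' B.cls i)

theorem aux_absorb {i : I} (ct : Fin (n + 2) → Option I) (s₀ : Fin (n + 2)) (m : I)
    (h0 : ct s₀ = some m) (hm : B.Connected i m)
    (z : Fin (n + 2) → L) (hz : ∀ t, z t ∈ B.elemSet (ct t)) :
    A.bracket z ∈ B.JJ i := by
  by_cases hz0 : A.bracket z = 0
  · rw [hz0]; exact zero_mem _
  rcases B.aux_master ct s₀ m h0 hm z hz with ⟨hV, c, _, hzc, hcls⟩ | ⟨p, hsp, hcp⟩
  · have hz' : z = fun t => B.e (c t) := funext hzc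
    refine Submodule.mem_sup_left (Submodule.subset_span ?_)
    exact ⟨hV, c, hcls hz0, by rw [hz']⟩
  · refine Submodule.mem_sup_right ?_
    have hle : Submodule.span F {B.e p} ≤ Submodule.span F (B.e '' B.cls i) := by
      refine Submodule.span_mono ?_
      intro x hx
      rw [Set.mem_singleton_iff] at hx
      exact ⟨p, hcp hz0, hx.symm⟩
    exact hle hsp

theorem aux_closed (i : I) (s₀ : Fin (n + 2)) (z : Fin (n + 2) → L)
    (hz0 : z s₀ ∈ B.JJ i) : A.bracket z ∈ B.JJ i := by
  classical
  set Gen0 : Set L := {z : L | z ∈ B.V ∧ ∃ c : Fin (n + 2) → I,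
      (∀ t, B.Connected i (c t)) ∧ z = A.bracket (fun t => B.e (c t))} ∪
    (B.e '' B.cls i) with hGen0
  set HVE : Set L := {v : L | v ∈ B.V ∧ ∃ g, v ∈ A.grading g} ∪ Set.range B.e with hHVE
  have hHVEtop : ∀ x : L, x ∈ Submodule.span F HVE := by
    intro x
    have hx : x ∈ B.V ⊔ B.W := by rw [B.compl.sup_eq_top]; exact Submodule.mem_top
    rcases Submodule.mem_sup.mp hx with ⟨v, hv, w, hw, rfl⟩
    have hVle : B.V ≤ Submodule.span F HVE := by
      conv_lhs => rw [B.V_graded]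
      refine iSup_le fun g => ?_
      intro x hx
      exact Submodule.subset_span (Or.inl ⟨hx.1, g, hx.2⟩)
    have hWle : B.W ≤ Submodule.span F HVE := by
      rw [← B.e_span]
      exact Submodule.span_mono Set.subset_union_right
    exact add_mem (hVle hv) (hWle hw)
  refine aux_ml A.bracket (fun t => if t = s₀ then Gen0 else HVE) (B.JJ i) ?_ z ?_
  swap
  · intro t
    show z t ∈ Submodule.span F (if t = s₀ then Gen0 else HVE)
    by_cases ht : t = s₀
    · rw [if_pos ht, hGen0, Submodule.span_union, ht]
      exact hz0
    · rw [if_neg ht]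
      exact hHVEtop (z t)
  intro w hw
  have hw0 : w s₀ ∈ Gen0 := by simpa using hw s₀
  have hwt : ∀ t, t ≠ s₀ → w t ∈ HVE := by
    intro t ht
    have h' : w t ∈ (if t = s₀ then Gen0 else HVE) := hw t
    rwa [if_neg ht] at h'
  set oy : Fin (n + 2) → Option I :=
    fun t => if h : ∃ k, w t = B.e k then some h.choose else none with hoy
  have hpat : ∀ t, t ≠ s₀ → w t ∈ B.elemSet (oy t) := by
    intro t ht
    rw [hoy]
    by_cases h : ∃ k, w t = B.e k
    · simp only [dif_pos h]
      exact h.choose_spec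
    · simp only [dif_neg h]
      rcases hwt t ht with hv | ⟨k, hk⟩
      · exact hv.1
      · exact absurd ⟨k, hk.symm⟩ h
  rcases hw0 with hgen | ⟨m, hmcls, hem⟩
  swap
  · -- first slot is `e m` with `m ∈ [i]`
    have hmc : B.Connected i m := hmcls
    set ct : Fin (n + 2) → Option I := Function.update oy s₀ (some m) with hctd
    have hct0 : ct s₀ = some m := Function.update_self _ _ _
    refine B.aux_absorb ct s₀ m hct0 hmc w ?_
    intro t
    by_cases ht : t = s₀
    · subst ht
      rw [hctd, Function.update_self]
      exact hem.symm
    · rw [hctd, Function.update_of_ne ht]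
      exact hpat t ht
  · -- first slot is a pure `[i]`-product lying in `V`: use the gLt identity
    rcases hgen with ⟨hPV, c, hccls, hPc⟩
    set y : Fin (n + 1) → L := fun u => w (s₀.succAbove u) with hy
    have hyH : ∀ u, ∃ g, y u ∈ A.grading g := by
      intro u
      rcases hwt (s₀.succAbove u) (Fin.succAbove_ne s₀ u) with hv | ⟨k, hk⟩
      · exact hv.2
      · refine ⟨B.deg k, ?_⟩
        show w (s₀.succAbove u) ∈ A.grading (B.deg k)
        rw [← hk]
        exact B.e_homog k
    set gy : Fin (n + 1) → G := fun u => (hyH u).choose with hgyd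
    have hgy : ∀ u, y u ∈ A.grading (gy u) := fun u => (hyH u).choose_spec
    have hx : ∀ t, (fun t => B.e (c t)) t ∈ A.grading ((fun t => B.deg (c t)) t) :=
      fun t => B.e_homog (c t)
    have hwE : w = Fin.insertNth s₀ (A.bracket (fun t => B.e (c t))) y := by
      rw [← hPc]
      exact (Fin.insertNth_self_removeNth s₀ w).symm
    rw [hwE, A.glt s₀ (fun t => B.deg (c t)) gy (fun t => B.e (c t)) y hx hgy]
    refine Submodule.sum_mem _ fun i' _ => Submodule.sum_mem _ fun j' _ =>
      Submodule.sum_mem _ fun σ₁ _ => Submodule.sum_mem _ fun σ₂ _ =>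
      Submodule.smul_mem _ _ ?_
    -- the inner product
    set q : I := c (σ₁ i') with hqd
    set IT : Fin (n + 2) → L := Fin.insertNth j' (B.e q) (fun u => y (σ₂ u)) with hITd
    set cy : Fin (n + 1) → Option I := fun u => oy (s₀.succAbove u) with hcyd
    have hcy : ∀ u, y u ∈ B.elemSet (cy u) :=
      fun u => hpat (s₀.succAbove u) (Fin.succAbove_ne s₀ u)
    set cti : Fin (n + 2) → Option I := Fin.insertNth j' (some q) (fun u => cy (σ₂ u))
      with hctid
    have hIT : ∀ t, IT t ∈ B.elemSet (cti t) := by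
      intro t
      refine Fin.succAboveCases j' ?_ ?_ t
      · rw [hITd, hctid]
        rw [Fin.insertNth_apply_same, Fin.insertNth_apply_same]
        rfl
      · intro u
        rw [hITd, hctid, Fin.insertNth_apply_succAbove, Fin.insertNth_apply_succAbove]
        exact hcy (σ₂ u)
    have hcti0 : cti j' = some q := by
      rw [hctid]; exact Fin.insertNth_apply_same (α := fun _ => Option I) j' (some q) _
    have hqc : B.Connected i q := hccls (σ₁ i')
    have ht₀ : ∃ t₀ : Fin (n + 2), t₀ ≠ i' := by
      by_cases h : i' = 0
      · exact ⟨1, by rw [h]; exact (Fin.zero_ne_one).symm⟩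
      · exact ⟨0, fun hh => h hh.symm⟩
    rcases ht₀ with ⟨t₀, ht₀⟩
    rcases B.aux_master cti j' q hcti0 hqc IT hIT with ⟨hIV, _⟩ | ⟨p, hsp, hcp⟩
    · -- inner lands in `V`: the outer product is a mixed product
      set cto : Fin (n + 2) → Option I :=
        fun t => if t = i' then none else some (c (σ₁ t)) with hctod
      refine B.aux_absorb cto t₀ (c (σ₁ t₀)) (by rw [hctod]; simp [ht₀]) (hccls (σ₁ t₀))
        (Function.update (fun t => B.e (c (σ₁ t))) i' (A.bracket IT)) ?_
      intro t
      by_cases ht : t = i'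
      · subst ht
        rw [Function.update_self, hctod]
        simp only [if_pos rfl]
        exact hIV
      · rw [Function.update_of_ne ht, hctod]
        simp only [if_neg ht]
        rfl
    · -- inner lands in a line `F e_p`
      rcases Submodule.mem_span_singleton.mp hsp with ⟨a, ha⟩
      by_cases ha0 : a = 0
      · have hIT0 : A.bracket IT = 0 := by rw [← ha, ha0, zero_smul]
        rw [hIT0, (A.bracket).map_update_zero]
        exact zero_mem _
      · have hIT0 : A.bracket IT ≠ 0 := by
          rw [← ha]
          exact smul_ne_zero ha0 (B.e_indep.ne_zero p)
        have hpc : B.Connected i p := hcp hIT0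
        rw [← ha, (A.bracket).map_update_smul]
        refine Submodule.smul_mem _ _ ?_
        have hupd : Function.update (fun t => B.e (c (σ₁ t))) i' (B.e p) =
            fun t => B.e (Function.update (fun t => c (σ₁ t)) i' p t) := by
          funext t
          by_cases ht : t = i'
          · subst ht; rw [Function.update_self, Function.update_self]
          · rw [Function.update_of_ne ht, Function.update_of_ne ht]
        rw [hupd]
        refine B.aux_absorb (fun t => some (Function.update (fun t => c (σ₁ t)) i' p t))
          t₀ (c (σ₁ t₀)) ?_ (hccls (σ₁ t₀)) _ (fun t => rfl)
        show some (Function.update (fun t => c (σ₁ t)) i' p t₀) = some (c (σ₁ t₀))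
        rw [Function.update_of_ne ht₀]

theorem aux_graded (i : I) : B.JJ i = ⨆ g : G, B.JJ i ⊓ A.grading g := by
  refine le_antisymm ?_ (iSup_le fun g => inf_le_left)
  refine sup_le ?_ ?_
  · refine Submodule.span_le.mpr ?_
    rintro z ⟨hzV, c, hcc, rfl⟩
    have hg : A.bracket (fun t => B.e (c t)) ∈ A.grading (∑ t, B.deg (c t)) :=
      A.bracket_graded (fun t => B.deg (c t)) _ (fun t => B.e_homog (c t))
    have hJ : A.bracket (fun t => B.e (c t)) ∈ B.JJ i :=
      Submodule.mem_sup_left (Submodule.subset_span ⟨hzV, c, hcc, rfl⟩)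
    exact le_iSup (fun g => B.JJ i ⊓ A.grading g) (∑ t, B.deg (c t)) ⟨hJ, hg⟩
  · refine Submodule.span_le.mpr ?_
    rintro z ⟨m, hmc, rfl⟩
    have hJ : B.e m ∈ B.JJ i :=
      Submodule.mem_sup_right (Submodule.subset_span ⟨m, hmc, rfl⟩)
    exact le_iSup (fun g => B.JJ i ⊓ A.grading g) (B.deg m) ⟨hJ, B.e_homog m⟩

theorem aux_isIdeal (i : I) : A.IsIdeal (B.JJ i) := by
  refine ⟨B.aux_graded i, ?_⟩
  intro σ x hx
  refine B.aux_closed i (σ.symm 0) (fun t => x (σ t)) ?_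
  show x (σ (σ.symm 0)) ∈ B.JJ i
  rwa [Equiv.apply_symm_apply]

end QMBasis

end Aux

theorem stmt6 {F : Type} [Field F] {G : Type} [AddCommGroup G] [DecidableEq G]
    {L : Type} [AddCommGroup L] [Module F L] {n : ℕ} {I : Type}
    {A : ColorGLT F G L n} (B : QMBasis A I)
    (hsimple : ∀ S : Submodule F L, A.IsIdeal S → S = ⊥ ∨ S = ⊤) (i j : I) :
    B.Connected i j := by
  classical
  rcases hsimple (B.JJ i) (B.aux_isIdeal i) with hbot | htop
  · exfalso
    have hei : B.e i ∈ B.JJ i :=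
      Submodule.mem_sup_right (Submodule.subset_span ⟨i, B.aux_conn_refl i, rfl⟩)
    rw [hbot] at hei
    exact B.e_indep.ne_zero i (Submodule.mem_bot F |>.mp hei)
  · have hej : B.e j ∈ B.JJ i := by rw [htop]; exact Submodule.mem_top
    have hle : B.JJ i ≤ B.V ⊔ Submodule.span F (B.e '' B.cls i) := by
      refine sup_le ?_ le_sup_right
      refine le_trans ?_ le_sup_left
      refine Submodule.span_le.mpr ?_
      rintro z ⟨hzV, -⟩
      exact hzV
    rcases Submodule.mem_sup.mp (hle hej) with ⟨v, hv, s, hs, hsum⟩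
    have hsW : s ∈ B.W := by
      rw [← B.e_span]
      exact Submodule.span_mono (Set.image_subset_range B.e (B.cls i)) hs
    have hejW : B.e j ∈ B.W := by
      rw [← B.e_span]
      exact Submodule.subset_span ⟨j, rfl⟩
    have hvW : v ∈ B.W := by
      have : v = B.e j - s := by rw [← hsum, add_sub_cancel_right]
      rw [this]
      exact sub_mem hejW hsW
    have hv0 : v = 0 := by
      have : v ∈ B.V ⊓ B.W := ⟨hv, hvW⟩
      rwa [B.compl.inf_eq_bot, Submodule.mem_bot] at this
    have hejs : B.e j ∈ Submodule.span F (B.e '' B.cls i) := by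
      rw [← hsum, hv0, zero_add]
      exact hs
    by_contra hnc
    exact B.e_indep.notMem_span_image (s := B.cls i) hnc hejs
end
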